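/- Fix a countably infinite type C of constants, let tuples be either R-tuples or S-tuples, each a pair in C × C, and let Q_RS be the Boolean query with Q_RS[W] = 1 iff there exists x such that R(x,y) ∈ W for some y and S(x,z) ∈ W for some z. Let D be a finite instance all of whose tuples are endogenous in which every tuple has the same first coordinate c, with r ≥ 1 R-tuples and s ≥ 1 S-tuples. Then for every R-tuple τ_R ∈ D and every S-tuple τ_S ∈ D: ρ(D,Q_RS,τ_R) = 1/r, ρ(D,Q_RS,τ_S) = 1/s, CE(D,Q_RS,τ_R) = (2^s − 1)/2^{r+s−1}, and CE(D,Q_RS,τ_S) = (2^r − 1)/2^{r+s−1}; equivalently, CE(D,Q_RS,τ_R) = P_D(Q_RS) · 2/(2^r − 1) and CE(D,Q_RS,τ_S) = P_D(Q_RS) · 2/(2^s − 1), where P_D(Q_RS) = (2^r − 1)(2^s − 1)/2^{r+s}. -/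

import Mathlib

open Finset

attribute [local instance] Classical.propDecidable

noncomputable section

variable {α : Type*} [DecidableEq α]

/-- The causal-effect score (= Banzhaf power index):
`CE(D,Q,τ) = 2^{-(|Dᵉⁿ|-1)} · Σ_{S ⊆ Dᵉⁿ∖{τ}} (Q[S ∪ Dᵉˣ ∪ {τ}] − Q[S ∪ Dᵉˣ])`. -/
def ceScore (Q : Finset α → ℕ) (Den Dex : Finset α) (τ : α) : ℝ :=
  (∑ S ∈ (Den.erase τ).powerset,
      ((Q (S ∪ Dex ∪ {τ}) : ℝ) - (Q (S ∪ Dex) : ℝ))) / 2 ^ (Den.card - 1)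

/-- The Shapley value of an endogenous tuple. -/
def shapleyScore (Q : Finset α → ℕ) (Den Dex : Finset α) (τ : α) : ℝ :=
  ∑ S ∈ (Den.erase τ).powerset,
    (((S.card.factorial : ℝ) * ((Den.card - S.card - 1).factorial : ℝ)) /
        (Den.card.factorial : ℝ)) *
      ((Q (S ∪ Dex ∪ {τ}) : ℝ) - (Q (S ∪ Dex) : ℝ))

/-- Responsibility: `1/(1+m)` where `m` is the minimum cardinality of a contingency set
for `τ`, and `0` if `τ` has no contingency set. -/
def respScore (Q : Finset α → ℕ) (D Den : Finset α) (τ : α) : ℝ :=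
  if ∃ Γ ⊆ Den.erase τ, Q (D \ Γ) = 1 ∧ Q (D \ insert τ Γ) = 0 then
    1 / (1 + ((sInf {n : ℕ | ∃ Γ ⊆ Den.erase τ,
        Γ.card = n ∧ Q (D \ Γ) = 1 ∧ Q (D \ insert τ Γ) = 0} : ℕ) : ℝ))
  else 0

/-- Probability of the Boolean query `Q` under the uniform-1/2 tuple-independent
distribution on an instance with endogenous part `Een` and exogenous part `Eex`. -/
def probQ (Q : Finset α → ℕ) (Een Eex : Finset α) : ℝ :=
  ((Een.powerset.filter (fun S => Q (S ∪ Eex) = 1)).card : ℝ) / 2 ^ Een.card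

/-- Two scores are aligned on the endogenous tuples. -/
def scoresAligned (sc1 sc2 : α → ℝ) (Den : Finset α) : Prop :=
  ∀ τ ∈ Den, ∀ τ' ∈ Den, (sc1 τ ≤ sc1 τ' ↔ sc2 τ ≤ sc2 τ')



lemma card_filter_nonempty' (T : Finset α) :
    (T.powerset.filter (fun S => S.Nonempty)).card = 2 ^ T.card - 1 := by
  have h : T.powerset.filter (fun S => S.Nonempty) = T.powerset.erase ∅ := by
    ext S; simp [Finset.nonempty_iff_ne_empty, and_comm]
  rw [h, Finset.card_erase_of_mem (by simp), Finset.card_powerset]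

lemma key_ce' (Q : Finset α → ℕ) (A B : Finset α) (hd : Disjoint A B)
    (hQ : ∀ W ⊆ A ∪ B, Q W = if (W ∩ A).Nonempty ∧ (W ∩ B).Nonempty then 1 else 0)
    (τ : α) (hτ : τ ∈ A) :
    ceScore Q (A ∪ B) ∅ τ = ((2:ℝ) ^ B.card - 1) / 2 ^ (A.card + B.card - 1) := by
  have hτB : τ ∉ B := Finset.disjoint_left.mp hd hτ
  have hBsub : B ⊆ (A ∪ B).erase τ := fun x hx =>
    Finset.mem_erase.mpr ⟨fun he => hτB (he ▸ hx), Finset.mem_union_right _ hx⟩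
  have hterm : ∀ S ∈ ((A ∪ B).erase τ).powerset,
      ((Q (S ∪ ∅ ∪ {τ}) : ℝ) - (Q (S ∪ ∅) : ℝ)) =
        if S ⊆ B ∧ S.Nonempty then 1 else 0 := by
    intro S hS
    rw [Finset.mem_powerset] at hS
    have hS1 : S ⊆ A ∪ B := hS.trans (Finset.erase_subset _ _)
    have h2sub : S ∪ {τ} ⊆ A ∪ B :=
      Finset.union_subset hS1 (Finset.singleton_subset_iff.mpr (Finset.mem_union_left _ hτ))
    have ha : ¬(S ∩ A).Nonempty ↔ S ⊆ B := by
      constructor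
      · intro h x hx
        rcases Finset.mem_union.mp (hS1 hx) with h' | h'
        · exact absurd ⟨x, Finset.mem_inter.mpr ⟨hx, h'⟩⟩ h
        · exact h'
      · rintro hsub ⟨x, hx⟩
        rw [Finset.mem_inter] at hx
        exact Finset.disjoint_left.mp hd hx.2 (hsub hx.1)
    have e1 : ((S ∪ {τ}) ∩ A).Nonempty := ⟨τ, by simp [hτ]⟩
    have e2 : (S ∪ {τ}) ∩ B = S ∩ B := by
      rw [Finset.union_inter_distrib_right, Finset.singleton_inter_of_notMem hτB,
        Finset.union_empty]
    simp only [Finset.union_empty]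
    rw [hQ _ h2sub, hQ _ hS1, e2]
    by_cases hb : (S ∩ B).Nonempty
    · by_cases haA : (S ∩ A).Nonempty
      · have hns : ¬(S ⊆ B ∧ S.Nonempty) := fun ⟨h1, _⟩ => (ha.mpr h1) haA
        simp [e1, hb, haA, hns, Finset.insert_inter_of_mem hτ]
      · have hSB : S ⊆ B := ha.mp haA
        have hne : S.Nonempty := hb.mono (Finset.inter_subset_left)
        simp [e1, hb, haA, hSB, hne, Finset.insert_inter_of_mem hτ]
    · have hns : ¬(S ⊆ B ∧ S.Nonempty) := fun ⟨h1, h2⟩ =>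
        hb (by rwa [Finset.inter_eq_left.mpr h1])
      simp [e1, hb, hns]
  rw [ceScore, Finset.sum_congr rfl hterm, Finset.sum_boole]
  have hfilter : ((A ∪ B).erase τ).powerset.filter (fun S => S ⊆ B ∧ S.Nonempty) =
      B.powerset.filter (fun S => S.Nonempty) := by
    ext S
    simp only [Finset.mem_filter, Finset.mem_powerset]
    exact ⟨fun ⟨_, h2, h3⟩ => ⟨h2, h3⟩, fun ⟨h2, h3⟩ => ⟨h2.trans hBsub, h2, h3⟩⟩
  rw [hfilter, card_filter_nonempty', Finset.card_union_of_disjoint hd]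
  have : ((2 ^ B.card - 1 : ℕ) : ℝ) = 2 ^ B.card - 1 := by
    push_cast [Nat.one_le_two_pow]; ring
  rw [this]

lemma key_resp' (Q : Finset α → ℕ) (A B : Finset α) (hd : Disjoint A B)
    (hQ : ∀ W ⊆ A ∪ B, Q W = if (W ∩ A).Nonempty ∧ (W ∩ B).Nonempty then 1 else 0)
    (τ : α) (hτ : τ ∈ A) (hB : B.Nonempty) :
    respScore Q (A ∪ B) (A ∪ B) τ = 1 / (A.card : ℝ) := by
  have hτB : τ ∉ B := Finset.disjoint_left.mp hd hτ
  set D := A ∪ B with hD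
  have hsub : A.erase τ ⊆ D.erase τ :=
    Finset.erase_subset_erase τ Finset.subset_union_left
  have c1 : Q (D \ A.erase τ) = 1 := by
    rw [hQ _ (Finset.sdiff_subset), if_pos]
    constructor
    · exact ⟨τ, Finset.mem_inter.mpr ⟨Finset.mem_sdiff.mpr
        ⟨Finset.mem_union_left _ hτ, Finset.notMem_erase _ _⟩, hτ⟩⟩
    · obtain ⟨b, hb⟩ := hB
      exact ⟨b, Finset.mem_inter.mpr ⟨Finset.mem_sdiff.mpr
        ⟨Finset.mem_union_right _ hb, fun h => Finset.disjoint_left.mp hd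
          (Finset.erase_subset _ _ h) hb⟩, hb⟩⟩
  have c2 : Q (D \ insert τ (A.erase τ)) = 0 := by
    rw [Finset.insert_erase hτ, hQ _ (Finset.sdiff_subset), if_neg]
    rintro ⟨⟨x, hx⟩, -⟩
    rw [Finset.mem_inter, Finset.mem_sdiff] at hx
    exact hx.1.2 hx.2
  have hex : ∃ Γ ⊆ D.erase τ, Q (D \ Γ) = 1 ∧ Q (D \ insert τ Γ) = 0 :=
    ⟨A.erase τ, hsub, c1, c2⟩
  have hmem : A.card - 1 ∈ {n : ℕ | ∃ Γ ⊆ D.erase τ,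
      Γ.card = n ∧ Q (D \ Γ) = 1 ∧ Q (D \ insert τ Γ) = 0} :=
    ⟨A.erase τ, hsub, Finset.card_erase_of_mem hτ, c1, c2⟩
  have hlb : ∀ n ∈ {n : ℕ | ∃ Γ ⊆ D.erase τ,
      Γ.card = n ∧ Q (D \ Γ) = 1 ∧ Q (D \ insert τ Γ) = 0}, A.card - 1 ≤ n := by
    rintro n ⟨Γ, hΓ, hcard, q1, q2⟩
    rw [hQ _ (Finset.sdiff_subset)] at q1 q2
    have hq2 : ¬(((D \ insert τ Γ) ∩ A).Nonempty ∧ ((D \ insert τ Γ) ∩ B).Nonempty) := by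
      intro h; rw [if_pos h] at q2; exact one_ne_zero q2
    have hq1 : ((D \ Γ) ∩ A).Nonempty ∧ ((D \ Γ) ∩ B).Nonempty := by
      by_contra h; rw [if_neg h] at q1; exact zero_ne_one q1
    have hAΓ : A.erase τ ⊆ Γ := by
      have hBne : ((D \ insert τ Γ) ∩ B).Nonempty := by
        obtain ⟨b, hb⟩ := hq1.2
        rw [Finset.mem_inter, Finset.mem_sdiff] at hb
        refine ⟨b, Finset.mem_inter.mpr ⟨Finset.mem_sdiff.mpr ⟨hb.1.1, ?_⟩, hb.2⟩⟩
        rw [Finset.mem_insert]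
        rintro (rfl | h)
        · exact hτB hb.2
        · exact hb.1.2 h
      have hAe : ¬((D \ insert τ Γ) ∩ A).Nonempty := fun h => hq2 ⟨h, hBne⟩
      intro a ha
      rw [Finset.mem_erase] at ha
      by_contra haΓ
      exact hAe ⟨a, Finset.mem_inter.mpr ⟨Finset.mem_sdiff.mpr
        ⟨Finset.mem_union_left _ ha.2, by
          rw [Finset.mem_insert]; rintro (rfl | h); exact ha.1 rfl; exact haΓ h⟩, ha.2⟩⟩
    calc A.card - 1 = (A.erase τ).card := (Finset.card_erase_of_mem hτ).symm
      _ ≤ Γ.card := Finset.card_le_card hAΓ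
      _ = n := hcard
  have hinf : sInf {n : ℕ | ∃ Γ ⊆ D.erase τ,
      Γ.card = n ∧ Q (D \ Γ) = 1 ∧ Q (D \ insert τ Γ) = 0} = A.card - 1 :=
    le_antisymm (Nat.sInf_le hmem) (hlb _ (Nat.sInf_mem ⟨_, hmem⟩))
  rw [respScore, if_pos hex, hinf]
  have hA1 : 1 ≤ A.card := Finset.card_pos.mpr ⟨τ, hτ⟩
  rw [Nat.cast_sub hA1]
  norm_num

lemma key_prob' (Q : Finset α → ℕ) (A B : Finset α) (hd : Disjoint A B)
    (hQ : ∀ W ⊆ A ∪ B, Q W = if (W ∩ A).Nonempty ∧ (W ∩ B).Nonempty then 1 else 0) :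
    probQ Q (A ∪ B) ∅ = ((2:ℝ) ^ A.card - 1) * ((2:ℝ) ^ B.card - 1) / 2 ^ (A.card + B.card) := by
  have hfe : (A ∪ B).powerset.filter (fun S => Q (S ∪ ∅) = 1) =
      (A ∪ B).powerset.filter (fun S => (S ∩ A).Nonempty ∧ (S ∩ B).Nonempty) := by
    apply Finset.filter_congr
    intro S hS
    rw [Finset.mem_powerset] at hS
    rw [Finset.union_empty, hQ _ hS]
    constructor
    · intro h; by_contra hc; rw [if_neg hc] at h; exact zero_ne_one h
    · intro h; rw [if_pos h]
  have hcard : ((A ∪ B).powerset.filter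
      (fun S => (S ∩ A).Nonempty ∧ (S ∩ B).Nonempty)).card =
      (2 ^ A.card - 1) * (2 ^ B.card - 1) := by
    rw [← card_filter_nonempty' A, ← card_filter_nonempty' B, ← Finset.card_product]
    apply Finset.card_bij' (fun S _ => (S ∩ A, S ∩ B))
      (fun p _ => p.1 ∪ p.2)
    · intro S hS
      rw [Finset.mem_filter] at hS
      simp only [Finset.mem_product, Finset.mem_filter, Finset.mem_powerset]
      exact ⟨⟨Finset.inter_subset_right, hS.2.1⟩, ⟨Finset.inter_subset_right, hS.2.2⟩⟩
    · intro p hp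
      simp only [Finset.mem_product, Finset.mem_filter, Finset.mem_powerset] at hp
      have h1 : p.1 ∩ A = p.1 := Finset.inter_eq_left.mpr hp.1.1
      have h2 : p.2 ∩ A = ∅ := by
        apply Finset.eq_empty_of_forall_notMem
        intro x hx
        rw [Finset.mem_inter] at hx
        exact Finset.disjoint_left.mp hd hx.2 (hp.2.1 hx.1)
      have h3 : p.1 ∩ B = ∅ := by
        apply Finset.eq_empty_of_forall_notMem
        intro x hx
        rw [Finset.mem_inter] at hx
        exact Finset.disjoint_left.mp hd (hp.1.1 hx.1) hx.2
      have h4 : p.2 ∩ B = p.2 := Finset.inter_eq_left.mpr hp.2.1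
      rw [Finset.mem_filter, Finset.mem_powerset]
      refine ⟨Finset.union_subset (hp.1.1.trans Finset.subset_union_left)
        (hp.2.1.trans Finset.subset_union_right), ?_, ?_⟩
      · rw [Finset.union_inter_distrib_right, h1, h2, Finset.union_empty]; exact hp.1.2
      · rw [Finset.union_inter_distrib_right, h3, h4, Finset.empty_union]; exact hp.2.2
    · intro S hS
      rw [Finset.mem_filter, Finset.mem_powerset] at hS
      rw [← Finset.inter_union_distrib_left, Finset.inter_eq_left.mpr hS.1]
    · intro p hp
      simp only [Finset.mem_product, Finset.mem_filter, Finset.mem_powerset] at hp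
      have h2 : p.2 ∩ A = ∅ := by
        apply Finset.eq_empty_of_forall_notMem
        intro x hx
        rw [Finset.mem_inter] at hx
        exact Finset.disjoint_left.mp hd hx.2 (hp.2.1 hx.1)
      have h3 : p.1 ∩ B = ∅ := by
        apply Finset.eq_empty_of_forall_notMem
        intro x hx
        rw [Finset.mem_inter] at hx
        exact Finset.disjoint_left.mp hd (hp.1.1 hx.1) hx.2
      ext1
      · simp only
        rw [Finset.union_inter_distrib_right, Finset.inter_eq_left.mpr hp.1.1, h2,
          Finset.union_empty]
      · simp only
        rw [Finset.union_inter_distrib_right, h3, Finset.inter_eq_left.mpr hp.2.1,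
          Finset.empty_union]
  rw [probQ, hfe, hcard, Finset.card_union_of_disjoint hd]
  push_cast [Nat.one_le_two_pow]
  ring


variable (C : Type) [DecidableEq C]

/-- The Boolean conjunctive query `∃x∃y∃z (R(x,y) ∧ S(x,z))`: R-tuples left,
S-tuples right. -/
def Qrs : Finset ((C × C) ⊕ (C × C)) → ℕ :=
  fun W => if ∃ x : C, (∃ y : C, Sum.inl (x, y) ∈ W) ∧ (∃ z : C, Sum.inr (x, z) ∈ W)
    then 1 else 0

/-- The first coordinate of a tuple. -/
def fstC : (C × C) ⊕ (C × C) → C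
  | Sum.inl p => p.1
  | Sum.inr p => p.1

/-- For a purely endogenous instance `D` for `Q_RS` in which all tuples share the same
first coordinate `c`, with `r ≥ 1` R-tuples and `s ≥ 1` S-tuples:
`ρ(τ_R) = 1/r`, `ρ(τ_S) = 1/s`, `CE(τ_R) = (2^s−1)/2^{r+s−1}`,
`CE(τ_S) = (2^r−1)/2^{r+s−1}`; equivalently `CE(τ_R) = P_D(Q)·2/(2^r−1)` and
`CE(τ_S) = P_D(Q)·2/(2^s−1)`, where `P_D(Q) = (2^r−1)(2^s−1)/2^{r+s}`. -/
theorem stmt16 [Countable C] [Infinite C] (D : Finset ((C × C) ⊕ (C × C))) (c : C)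
    (hc : ∀ t ∈ D, fstC C t = c) (r s : ℕ)
    (hr : r = (D.filter (fun t => ∃ p, t = Sum.inl p)).card)
    (hs : s = (D.filter (fun t => ∃ p, t = Sum.inr p)).card)
    (hr1 : 1 ≤ r) (hs1 : 1 ≤ s) :
    (∀ p : C × C, Sum.inl p ∈ D →
        respScore (Qrs C) D D (Sum.inl p) = 1 / (r : ℝ) ∧
        ceScore (Qrs C) D ∅ (Sum.inl p) = ((2 : ℝ) ^ s - 1) / 2 ^ (r + s - 1) ∧
        ceScore (Qrs C) D ∅ (Sum.inl p) = probQ (Qrs C) D ∅ * 2 / ((2 : ℝ) ^ r - 1)) ∧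
    (∀ p : C × C, Sum.inr p ∈ D →
        respScore (Qrs C) D D (Sum.inr p) = 1 / (s : ℝ) ∧
        ceScore (Qrs C) D ∅ (Sum.inr p) = ((2 : ℝ) ^ r - 1) / 2 ^ (r + s - 1) ∧
        ceScore (Qrs C) D ∅ (Sum.inr p) = probQ (Qrs C) D ∅ * 2 / ((2 : ℝ) ^ s - 1)) ∧
    probQ (Qrs C) D ∅ = ((2 : ℝ) ^ r - 1) * ((2 : ℝ) ^ s - 1) / 2 ^ (r + s) := by

  classical
  set R := D.filter (fun t => ∃ p, t = Sum.inl p) with hRdef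
  set Sf := D.filter (fun t => ∃ p, t = Sum.inr p) with hSdef
  have hUnion : R ∪ Sf = D := by
    ext t
    simp only [hRdef, hSdef, Finset.mem_union, Finset.mem_filter]
    constructor
    · rintro (⟨h, -⟩ | ⟨h, -⟩) <;> exact h
    · intro ht
      rcases t with p | p
      · exact Or.inl ⟨ht, p, rfl⟩
      · exact Or.inr ⟨ht, p, rfl⟩
  have hdisj : Disjoint R Sf := by
    rw [Finset.disjoint_left]
    rintro t ht ht'
    rw [hRdef, Finset.mem_filter] at ht
    rw [hSdef, Finset.mem_filter] at ht'
    obtain ⟨p, rfl⟩ := ht.2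
    obtain ⟨q, h⟩ := ht'.2
    exact Sum.inl_ne_inr h
  have hQ1 : ∀ W ⊆ R ∪ Sf, Qrs C W =
      if (W ∩ R).Nonempty ∧ (W ∩ Sf).Nonempty then 1 else 0 := by
    intro W hW
    rw [hUnion] at hW
    rw [Qrs]
    refine if_congr ?_ rfl rfl
    constructor
    · rintro ⟨x, ⟨y, hy⟩, ⟨z, hz⟩⟩
      constructor
      · exact ⟨Sum.inl (x, y), Finset.mem_inter.mpr ⟨hy,
          Finset.mem_filter.mpr ⟨hW hy, ⟨(x, y), rfl⟩⟩⟩⟩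
      · exact ⟨Sum.inr (x, z), Finset.mem_inter.mpr ⟨hz,
          Finset.mem_filter.mpr ⟨hW hz, ⟨(x, z), rfl⟩⟩⟩⟩
    · rintro ⟨⟨t, ht⟩, ⟨t', ht'⟩⟩
      rw [Finset.mem_inter, Finset.mem_filter] at ht ht'
      obtain ⟨⟨y1, y2⟩, rfl⟩ := ht.2.2
      obtain ⟨⟨z1, z2⟩, rfl⟩ := ht'.2.2
      have h1 : y1 = c := hc _ ht.2.1
      have h2 : z1 = c := hc _ ht'.2.1
      exact ⟨c, ⟨y2, h1 ▸ ht.1⟩, ⟨z2, h2 ▸ ht'.1⟩⟩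
  have hQ2 : ∀ W ⊆ Sf ∪ R, Qrs C W =
      if (W ∩ Sf).Nonempty ∧ (W ∩ R).Nonempty then 1 else 0 := by
    intro W hW
    rw [Finset.union_comm] at hW
    rw [hQ1 W hW]
    exact if_congr and_comm rfl rfl
  have hUnion2 : Sf ∪ R = D := by rw [Finset.union_comm]; exact hUnion
  have hcR : R.card = r := hr.symm
  have hcS : Sf.card = s := hs.symm
  have hRne : R.Nonempty := Finset.card_pos.mp (by omega)
  have hSne : Sf.Nonempty := Finset.card_pos.mp (by omega)
  have h2r : (2:ℝ) ^ r - 1 ≠ 0 := by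
    have h1 : (1:ℝ) < 2 ^ r := one_lt_pow₀ (by norm_num) (by omega)
    exact sub_ne_zero.mpr (ne_of_gt h1)
  have h2s : (2:ℝ) ^ s - 1 ≠ 0 := by
    have h1 : (1:ℝ) < 2 ^ s := one_lt_pow₀ (by norm_num) (by omega)
    exact sub_ne_zero.mpr (ne_of_gt h1)
  have hpow : (2:ℝ) ^ (r + s) = 2 ^ (r + s - 1) * 2 := by
    rw [← pow_succ]; congr 1; omega
  have hprob : probQ (Qrs C) D ∅ =
      ((2:ℝ) ^ r - 1) * ((2:ℝ) ^ s - 1) / 2 ^ (r + s) := by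
    have := key_prob' (Qrs C) R Sf hdisj hQ1
    rw [hUnion, hcR, hcS] at this
    exact this
  refine ⟨?_, ?_, hprob⟩
  · intro p hp
    have hpR : Sum.inl p ∈ R := Finset.mem_filter.mpr ⟨hp, p, rfl⟩
    have hce : ceScore (Qrs C) D ∅ (Sum.inl p) =
        ((2:ℝ) ^ s - 1) / 2 ^ (r + s - 1) := by
      have := key_ce' (Qrs C) R Sf hdisj hQ1 (Sum.inl p) hpR
      rw [hUnion, hcR, hcS] at this
      exact this
    refine ⟨?_, hce, ?_⟩
    · have := key_resp' (Qrs C) R Sf hdisj hQ1 (Sum.inl p) hpR hSne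
      rw [hUnion, hcR] at this
      exact this
    · rw [hce, hprob, hpow]
      field_simp
  · intro p hp
    have hpS : Sum.inr p ∈ Sf := Finset.mem_filter.mpr ⟨hp, p, rfl⟩
    have hce : ceScore (Qrs C) D ∅ (Sum.inr p) =
        ((2:ℝ) ^ r - 1) / 2 ^ (r + s - 1) := by
      have := key_ce' (Qrs C) Sf R hdisj.symm hQ2 (Sum.inr p) hpS
      rw [hUnion2, hcR, hcS, Nat.add_comm s r] at this
      exact this
    refine ⟨?_, hce, ?_⟩
    · have := key_resp' (Qrs C) Sf R hdisj.symm hQ2 (Sum.inr p) hpS hRne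
      rw [hUnion2, hcS] at this
      exact this
    · rw [hce, hprob, hpow]
      field_simp


end
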